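/- Let ω > 0, u₀ > 0, u₁ ≠ 0, set V(t) = u₁ t + u₀, and let J be the interval of times t with V(t) > 0. Let (x, p) : J → ℝ² be a differentiable solution of x'(t) = p(t), p'(t) = −(ω²/V(t)⁴) x(t), and suppose V(t) p(t) − u₁ x(t) > 0 for all t ∈ J. Let I₁ denote the (constant, by the first-integral property) value of (ω x/V)² + (V p − u₁ x)², and assume I₁ > 0. Then the function I₂(t) = arcsin( ω x(t) / (V(t) √I₁) ) + ω/(u₁ V(t)) is constant on J. -/

import Mathlib

/-- With `ω > 0`, `u₀ > 0`, `u₁ ≠ 0`, `V(t) = u₁t + u₀`,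
`J = {t | V(t) > 0}`, for a solution of `x' = p`, `p' = −(ω²/V⁴)x` on `J` with
`Vp − u₁x > 0` on `J` and constant first-integral value `I₁ > 0` of
`(ωx/V)² + (Vp − u₁x)²`, the function
`I₂(t) = arcsin(ωx/(V√I₁)) + ω/(u₁V)` is constant on `J`. -/
theorem first_integral_I2_inverse_quartic
    (ω u₀ u₁ : ℝ) (hω : 0 < ω) (hu₀ : 0 < u₀) (hu₁ : u₁ ≠ 0)
    (V : ℝ → ℝ) (hV : ∀ t, V t = u₁ * t + u₀)
    (J : Set ℝ) (hJ : J = {t : ℝ | 0 < V t})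
    (x p : ℝ → ℝ)
    (hx : ∀ t ∈ J, HasDerivAt x (p t) t)
    (hp : ∀ t ∈ J, HasDerivAt p (-(ω ^ 2 / (V t) ^ 4) * x t) t)
    (hpos : ∀ t ∈ J, 0 < V t * p t - u₁ * x t)
    (I₁ : ℝ) (hI₁pos : 0 < I₁)
    (hI₁ : ∀ t ∈ J, (ω * x t / V t) ^ 2 + (V t * p t - u₁ * x t) ^ 2 = I₁) :
    ∀ t ∈ J, ∀ s ∈ J,
      Real.arcsin (ω * x t / (V t * Real.sqrt I₁)) + ω / (u₁ * V t) =
        Real.arcsin (ω * x s / (V s * Real.sqrt I₁)) + ω / (u₁ * V s) := by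
  have hVfun : V = fun t => u₁ * t + u₀ := funext hV
  set sq := Real.sqrt I₁ with hsq
  have hsq0 : 0 < sq := Real.sqrt_pos.mpr hI₁pos
  have hsq2 : sq ^ 2 = I₁ := Real.sq_sqrt hI₁pos.le
  set f : ℝ → ℝ := fun t => Real.arcsin (ω * x t / (V t * sq)) + ω / (u₁ * V t)
    with hf
  -- J is open and convex
  have hJopen : IsOpen J := by
    rw [hJ, hVfun]
    exact isOpen_lt continuous_const (by continuity)
  have hJconv : Convex ℝ J := by
    rw [hJ, hVfun]
    intro a ha b hb μ ν hμ hν hμν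
    simp only [Set.mem_setOf_eq, smul_eq_mul] at *
    rcases hμ.lt_or_eq with h | h
    · nlinarith [mul_pos h ha, mul_nonneg hν hb.le]
    · nlinarith
  -- key derivative computation
  have key : ∀ t ∈ J, HasDerivAt f 0 t := by
    intro t ht
    have hVt : 0 < V t := by rw [hJ] at ht; exact ht
    have hD : 0 < V t * p t - u₁ * x t := hpos t ht
    have hIt := hI₁ t ht
    have hVd : HasDerivAt V u₁ t := by
      rw [hVfun]
      simpa using ((hasDerivAt_id t).const_mul u₁).add_const u₀
    have hne : V t * sq ≠ 0 := by positivity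
    -- derivative of inner function
    have hg : HasDerivAt (fun τ => ω * x τ / (V τ * sq))
        (ω * (V t * p t - u₁ * x t) / ((V t) ^ 2 * sq)) t := by
      have := ((hx t ht).const_mul ω).div (hVd.mul_const sq) hne
      refine this.congr_deriv ?_
      field_simp
    set u := ω * x t / (V t * sq) with hu
    have aux : V t ^ 2 * sq ^ 2 = (ω * x t) ^ 2 + V t ^ 2 * (V t * p t - u₁ * x t) ^ 2 := by
      rw [hsq2, ← hIt]
      field_simp
    have hu2 : u ^ 2 = (I₁ - (V t * p t - u₁ * x t) ^ 2) / I₁ := by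
      rw [hu, div_pow, div_eq_div_iff (by positivity) hI₁pos.ne']
      linear_combination (-I₁) * aux + V t ^ 2 * (V t * p t - u₁ * x t) ^ 2 * hsq2
    have hult : u ^ 2 < 1 := by
      rw [hu2]
      rw [div_lt_one hI₁pos]
      nlinarith
    have hne1 : u ≠ -1 := by intro h; rw [h] at hult; norm_num at hult
    have hne2 : u ≠ 1 := by intro h; rw [h] at hult; norm_num at hult
    have harc := (Real.hasDerivAt_arcsin hne1 hne2).comp t hg
    have hsqrt : Real.sqrt (1 - u ^ 2) = (V t * p t - u₁ * x t) / sq := by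
      have h1 : 1 - u ^ 2 = ((V t * p t - u₁ * x t) / sq) ^ 2 := by
        rw [hu2, div_pow, hsq2]
        field_simp
        ring
      rw [h1, Real.sqrt_sq (by positivity)]
    have hne' : u₁ * V t ≠ 0 := mul_ne_zero hu₁ (ne_of_gt hVt)
    have h2 : HasDerivAt (fun τ => ω / (u₁ * V τ))
        ((0 * (u₁ * V t) - ω * (u₁ * u₁)) / (u₁ * V t) ^ 2) t :=
      (hasDerivAt_const t ω).div (hVd.const_mul u₁) hne'
    have := harc.add h2
    refine this.congr_deriv ?_
    rw [hsqrt]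
    have hDne : V t * p t - u₁ * x t ≠ 0 := ne_of_gt hD
    field_simp
    ring
  intro t ht s hs
  have hdiff : DifferentiableOn ℝ f J := fun z hz =>
    (key z hz).differentiableAt.differentiableWithinAt
  have hfd : ∀ z ∈ J, fderivWithin ℝ f J z = 0 := by
    intro z hz
    have h1 : fderivWithin ℝ f J z = fderiv ℝ f z :=
      fderivWithin_of_isOpen hJopen hz
    rw [h1, (key z hz).hasFDerivAt.fderiv]
    exact ContinuousLinearMap.ext fun y => by
      simp [ContinuousLinearMap.smulRight_apply]
  exact hJconv.is_const_of_fderivWithin_eq_zero hdiff hfd ht hs
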